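/- arXiv:1607.01228 — 5 statements merged into one kernel-verified Lean document; each statement's English description precedes it below -/
import Mathlib

section
/- The transversal monomial ideal of degree n-1 satisfies the decomposition I_{n,n-1} = Σ_{i=1}^{n-1} P_1···P_{i-1}·(P_i + P_{i+1})·P_{i+2}···P_n. -/
open MvPolynomial

/-- The ideal generated by the variables `x_{j,0}, …, x_{j,b j - 1}` (the `j`-th block). -/
noncomputable def PId (k : Type*) [Field k] (b : ℕ → ℕ) (j : ℕ) :
    Ideal (MvPolynomial (ℕ × ℕ) k) :=
  Ideal.span {f | ∃ i < b j, f = X (j, i)}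

/-- The transversal monomial ideal `I_{p,q} = Σ_{j_1<⋯<j_q < p} P_{j_1}⋯P_{j_q}`
(indices zero-based). -/
noncomputable def TId (k : Type*) [Field k] (b : ℕ → ℕ) (p q : ℕ) :
    Ideal (MvPolynomial (ℕ × ℕ) k) :=
  ⨆ (s : Finset ℕ) (_ : s.card = q ∧ s ⊆ Finset.range p), ∏ j ∈ s, PId k b j

/-- `Q_{r} = Σ_{j=r}^{n-1} P_j` (zero-based). -/
noncomputable def QId (k : Type*) [Field k] (b : ℕ → ℕ) (r n : ℕ) :
    Ideal (MvPolynomial (ℕ × ℕ) k) :=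
  ∑ j ∈ Finset.Ico r n, PId k b j

section aux
variable {R : Type*} [CommRing R]

lemma idealSum_eq_sup {α : Type*} (t : Finset α) (f : α → Ideal R) :
    ∑ i ∈ t, f i = t.sup f := by
  induction t using Finset.cons_induction with
  | empty => simp
  | cons a t h ih => rw [Finset.sum_cons, Finset.sup_cons, ih, Submodule.add_eq_sup]

end aux

noncomputable def AId (k : Type*) [Field k] (b : ℕ → ℕ) (n m : ℕ) :
    Ideal (MvPolynomial (ℕ × ℕ) k) :=
  ∏ j ∈ (Finset.range n).erase m, PId k b j

lemma AId_split (k : Type*) [Field k] (b : ℕ → ℕ) {n m : ℕ} (h : m < n) :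
    AId k b n m = (∏ j ∈ Finset.range m, PId k b j) * ∏ j ∈ Finset.Ico (m+1) n, PId k b j := by
  rw [AId, ← Finset.prod_union]
  · congr 1
    ext a
    simp only [Finset.mem_erase, Finset.mem_range, Finset.mem_union, Finset.mem_Ico]
    omega
  · rw [Finset.disjoint_left]
    intro a ha hb
    simp only [Finset.mem_range] at ha
    simp only [Finset.mem_Ico] at hb
    omega

lemma TId_eq (k : Type*) [Field k] (b : ℕ → ℕ) (n : ℕ) (hn : 1 ≤ n) :
    TId k b n (n - 1) = (Finset.range n).sup (AId k b n) := by
  apply le_antisymm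
  · apply iSup₂_le
    rintro s ⟨hc, hs⟩
    have hcard : (Finset.range n \ s).card = 1 := by
      rw [Finset.card_sdiff_of_subset hs, Finset.card_range, hc]
      omega
    obtain ⟨m, hm⟩ := Finset.card_eq_one.mp hcard
    have hmn : m ∈ Finset.range n \ s := hm ▸ Finset.mem_singleton_self m
    rw [Finset.mem_sdiff] at hmn
    have hse : s = (Finset.range n).erase m := by
      ext a
      simp only [Finset.mem_erase]
      constructor
      · intro ha
        refine ⟨fun he => hmn.2 (he ▸ ha), hs ha⟩
      · rintro ⟨hne, har⟩
        by_contra hns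
        have : a ∈ Finset.range n \ s := Finset.mem_sdiff.mpr ⟨har, hns⟩
        rw [hm, Finset.mem_singleton] at this
        exact hne this
    rw [hse]
    exact Finset.le_sup (f := AId k b n) hmn.1
  · apply Finset.sup_le
    intro m hm
    exact le_iSup₂_of_le ((Finset.range n).erase m)
      ⟨by rw [Finset.card_erase_of_mem hm, Finset.card_range], Finset.erase_subset _ _⟩ le_rfl

/-- `I_{n,n-1} = Σ_{i=1}^{n-1} P_1⋯P_{i-1}(P_i+P_{i+1})P_{i+2}⋯P_n`
(zero-based: the `i`-th summand is `(∏_{j<i} P_j)·(P_i+P_{i+1})·(∏_{i+1<j<n} P_j)`). -/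
theorem transversal_deg_sub_one (k : Type*) [Field k] (b : ℕ → ℕ) (n : ℕ) (hn : 2 ≤ n) :
    TId k b n (n - 1) =
      ∑ i ∈ Finset.range (n - 1),
        (∏ j ∈ Finset.range i, PId k b j) * (PId k b i + PId k b (i + 1)) *
          ∏ j ∈ Finset.Ico (i + 2) n, PId k b j := by
  have hterm : ∀ i ∈ Finset.range (n - 1),
      (∏ j ∈ Finset.range i, PId k b j) * (PId k b i + PId k b (i + 1)) *
          ∏ j ∈ Finset.Ico (i + 2) n, PId k b j = AId k b n (i+1) ⊔ AId k b n i := by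
    intro i hi
    rw [Finset.mem_range] at hi
    have h1 : i + 1 < n := by omega
    rw [AId_split k b h1, AId_split k b (by omega : i < n),
      Finset.prod_range_succ,
      Finset.prod_eq_prod_Ico_succ_bot (by omega : i + 1 < n)]
    rw [← Submodule.add_eq_sup, mul_add, add_mul]
    ring_nf
  rw [Finset.sum_congr rfl hterm, TId_eq k b n (by omega), idealSum_eq_sup]
  apply le_antisymm
  · apply Finset.sup_le
    intro m hm
    rw [Finset.mem_range] at hm
    rcases Nat.lt_or_ge m (n-1) with h | h
    · exact le_trans le_sup_right (Finset.le_sup (f := fun x => AId k b n (x+1) ⊔ AId k b n x) (Finset.mem_range.mpr h))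
    · have hm' : m = n - 1 := by omega
      have : AId k b n m ≤ AId k b n (n-2+1) ⊔ AId k b n (n-2) := by
        rw [hm']
        have : n - 2 + 1 = n - 1 := by omega
        rw [this]
        exact le_sup_left
      exact le_trans this (Finset.le_sup (f := fun x => AId k b n (x+1) ⊔ AId k b n x) (Finset.mem_range.mpr (by omega : n - 2 < n - 1)))
  · apply Finset.sup_le
    intro i hi
    rw [Finset.mem_range] at hi
    apply sup_le
    · exact Finset.le_sup (Finset.mem_range.mpr (by omega : i + 1 < n))
    · exact Finset.le_sup (Finset.mem_range.mpr (by omega : i < n))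
end

section
/- For all t with 2 ≤ t ≤ n, the transversal monomial ideal satisfies I_{n,t} = Σ_{i=t-1}^{n-1} I_{i,t-1}·Q_{i+1}, where Q_r = P_r + P_{r+1} + ··· + P_n. -/
open MvPolynomial

/-- for `2 ≤ t ≤ n`, `I_{n,t} = Σ_{i=t-1}^{n-1} I_{i,t-1}·Q_{i+1}`
(zero-based: the one-based `Q_{i+1}` is `QId k b i n`). -/
theorem transversal_decomposition (k : Type*) [Field k] (b : ℕ → ℕ) (n t : ℕ)
    (ht : 2 ≤ t) (htn : t ≤ n) :
    TId k b n t =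
      ∑ i ∈ Finset.Icc (t - 1) (n - 1), TId k b i (t - 1) * QId k b i n := by
  apply le_antisymm
  · rw [TId]
    apply iSup_le; intro s
    apply iSup_le; rintro ⟨hcard, hsub⟩
    have hne : s.Nonempty := Finset.card_pos.mp (by omega)
    set m := s.max' hne with hm
    have hmem : m ∈ s := s.max'_mem hne
    have hmn : m < n := Finset.mem_range.mp (hsub hmem)
    have hsub' : s ⊆ Finset.range (m + 1) := fun x hx =>
      Finset.mem_range.mpr (Nat.lt_succ_of_le (s.le_max' x hx))
    have hcardle : t ≤ m + 1 := by
      have := Finset.card_le_card hsub'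
      rw [hcard, Finset.card_range] at this; exact this
    have key : ∏ j ∈ s, PId k b j ≤ TId k b m (t - 1) * QId k b m n := by
      rw [← Finset.prod_erase_mul s _ hmem]
      apply Ideal.mul_mono
      · apply le_iSup_of_le (s.erase m)
        refine le_iSup_of_le ⟨?_, ?_⟩ le_rfl
        · rw [Finset.card_erase_of_mem hmem, hcard]
        · intro x hx
          exact Finset.mem_range.mpr (lt_of_le_of_ne
            (s.le_max' x (Finset.mem_of_mem_erase hx)) (Finset.ne_of_mem_erase hx))
      · exact Finset.single_le_sum (f := fun j => PId k b j)
          (fun i _ => zero_le) (Finset.mem_Ico.mpr ⟨le_rfl, hmn⟩)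
    refine key.trans (Finset.single_le_sum (f := fun i => TId k b i (t-1) * QId k b i n)
      (fun i _ => zero_le) (Finset.mem_Icc.mpr ⟨by omega, by omega⟩))
  · rw [Ideal.sum_eq_sup]
    apply Finset.sup_le; intro i hi
    obtain ⟨hi1, hi2⟩ := Finset.mem_Icc.mp hi
    rw [QId, Finset.mul_sum, Ideal.sum_eq_sup]
    apply Finset.sup_le; intro j hj
    obtain ⟨hij, hjn⟩ := Finset.mem_Ico.mp hj
    rw [mul_comm, TId, ← Ideal.smul_eq_mul, Submodule.smul_iSup]
    apply iSup_le; intro s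
    rw [Submodule.smul_iSup]
    apply iSup_le; rintro ⟨hcard, hsub⟩
    rw [Ideal.smul_eq_mul]
    have hjs : j ∉ s := fun h => absurd (Finset.mem_range.mp (hsub h)) (by omega)
    rw [← Finset.prod_insert hjs]
    apply le_iSup_of_le (insert j s)
    refine le_iSup_of_le ⟨?_, ?_⟩ le_rfl
    · rw [Finset.card_insert_of_notMem hjs, hcard]; omega
    · intro x hx
      rcases Finset.mem_insert.mp hx with rfl | hx
      · exact Finset.mem_range.mpr hjn
      · exact Finset.mem_range.mpr (by have := Finset.mem_range.mp (hsub hx); omega)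
end

section
/- The intersection of the two ideals I_{n-1,n-2}·P_n and I_{n-2,n-2}·(P_{n-1}+P_n) equals I_{n-2,n-2}·P_n. -/
open MvPolynomial

lemma span_inf_le_mul {R : Type*} [CommRing R] (φ : R →+* R) (P : Ideal R) (G : Set R)
    (hG : ∀ g ∈ G, φ g = g) (hP : ∀ f ∈ P, φ f = 0) (hsub : ∀ c : R, c - φ c ∈ P) :
    Ideal.span G ⊓ P ≤ Ideal.span G * P := by
  rintro f ⟨hfJ, hfP⟩
  rw [SetLike.mem_coe, Ideal.span, Submodule.mem_span_set] at hfJ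
  obtain ⟨c, hs, hsum⟩ := hfJ
  rw [Finsupp.sum] at hsum
  have hφ : φ f = ∑ g ∈ c.support, φ (c g) * g := by
    rw [← hsum, map_sum]
    exact Finset.sum_congr rfl fun g hg => by rw [smul_eq_mul, map_mul, hG g (hs hg)]
  have h0 : φ f = 0 := hP _ hfP
  have hf2 : f = ∑ g ∈ c.support, (c g - φ (c g)) * g := by
    rw [← sub_zero f]
    nth_rewrite 1 [← h0]
    rw [hφ, ← hsum, ← Finset.sum_sub_distrib]
    exact Finset.sum_congr rfl fun g hg => by rw [smul_eq_mul, sub_mul]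
  rw [hf2]
  refine Ideal.sum_mem _ fun g hg => ?_
  rw [mul_comm (c g - φ (c g)) g]
  exact Ideal.mul_mem_mul (Ideal.subset_span (hs hg)) (hsub _)

/-- The substitution killing the variables of block `m`. -/
noncomputable def phiK (k : Type*) [Field k] (b : ℕ → ℕ) (m : ℕ) :
    MvPolynomial (ℕ × ℕ) k →+* MvPolynomial (ℕ × ℕ) k :=
  (aeval fun v : ℕ × ℕ => if v.1 = m ∧ v.2 < b m then 0 else X v).toRingHom

lemma phiK_X (k : Type*) [Field k] (b : ℕ → ℕ) (m : ℕ) (v : ℕ × ℕ) :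
    phiK k b m (X v) = if v.1 = m ∧ v.2 < b m then 0 else X v := by
  simp [phiK]

lemma phiK_X_ne (k : Type*) [Field k] (b : ℕ → ℕ) (m : ℕ) (v : ℕ × ℕ) (h : v.1 ≠ m) :
    phiK k b m (X v) = X v := by
  rw [phiK_X, if_neg]; tauto

lemma phiK_zero (k : Type*) [Field k] (b : ℕ → ℕ) (m : ℕ) (f : MvPolynomial (ℕ × ℕ) k)
    (hf : f ∈ PId k b m) : phiK k b m f = 0 := by
  have : Ideal.map (phiK k b m) (PId k b m) ≤ ⊥ := by
    rw [PId, Ideal.map_span, Ideal.span_le]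
    rintro g ⟨f, ⟨i, hi, rfl⟩, rfl⟩
    simp [phiK_X, hi]
  exact this (Ideal.mem_map_of_mem _ hf)

lemma phiK_sub_mem (k : Type*) [Field k] (b : ℕ → ℕ) (m : ℕ) (c : MvPolynomial (ℕ × ℕ) k) :
    c - phiK k b m c ∈ PId k b m := by
  induction c using MvPolynomial.induction_on with
  | C a => simp [phiK]
  | add p q hp hq =>
      have : p + q - phiK k b m (p + q) = (p - phiK k b m p) + (q - phiK k b m q) := by
        rw [map_add]; ring
      rw [this]; exact Ideal.add_mem _ hp hq
  | mul_X p v hp =>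
      by_cases h : v.1 = m ∧ v.2 < b m
      · have hX : X v ∈ PId k b m := by
          apply Ideal.subset_span
          exact ⟨v.2, h.2, by rw [← h.1]⟩
        rw [map_mul, phiK_X, if_pos h, mul_zero, sub_zero]
        exact Ideal.mul_mem_left _ _ hX
      · rw [map_mul, phiK_X, if_neg h]
        have : p * X v - phiK k b m p * X v = (p - phiK k b m p) * X v := by ring
        rw [this]
        exact Ideal.mul_mem_right _ _ hp

open Pointwise in
lemma prod_fixed (k : Type*) [Field k] (b : ℕ → ℕ) (m : ℕ) (s : Finset ℕ)
    (h : ∀ j ∈ s, j ≠ m) :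
    ∃ G : Set (MvPolynomial (ℕ × ℕ) k),
      ∏ j ∈ s, PId k b j = Ideal.span G ∧ ∀ g ∈ G, phiK k b m g = g := by
  classical
  induction s using Finset.induction_on with
  | empty =>
      exact ⟨{1}, by simp [Ideal.span_singleton_one], by rintro g rfl; simp⟩
  | insert a t hj ih =>
      obtain ⟨G, hG, hfix⟩ := ih fun j hjt => h j (Finset.mem_insert_of_mem hjt)
      refine ⟨{f | ∃ i < b a, f = X (a, i)} * G, ?_, ?_⟩
      · rw [Finset.prod_insert hj, hG, PId, Ideal.span_mul_span']
      · rintro g ⟨x, ⟨i, hi, rfl⟩, y, hy, rfl⟩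
        rw [map_mul, hfix y hy, phiK_X_ne]
        exact h a (Finset.mem_insert_self a t)

lemma single_le_TId (k : Type*) [Field k] (b : ℕ → ℕ) (p q : ℕ) (s : Finset ℕ)
    (h1 : s.card = q) (h2 : s ⊆ Finset.range p) :
    ∏ j ∈ s, PId k b j ≤ TId k b p q :=
  le_iSup_of_le s (le_iSup_of_le ⟨h1, h2⟩ le_rfl)

lemma TId_self (k : Type*) [Field k] (b : ℕ → ℕ) (m : ℕ) :
    TId k b m m = ∏ j ∈ Finset.range m, PId k b j := by
  refine le_antisymm (iSup_le fun s => iSup_le fun ⟨h1, h2⟩ => ?_)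
    (single_le_TId k b m m _ (Finset.card_range m) le_rfl)
  have : s = Finset.range m :=
    Finset.eq_of_subset_of_card_le h2 (by rw [h1, Finset.card_range])
  rw [this]

/-- `(I_{n-1,n-2}·P_n) ∩ (I_{n-2,n-2}·(P_{n-1}+P_n)) = I_{n-2,n-2}·P_n`
(zero-based: one-based `P_n`, `P_{n-1}` are `PId k b (n-1)`, `PId k b (n-2)`). -/
theorem intersection_formula (k : Type*) [Field k] (b : ℕ → ℕ) (n : ℕ) (hn : 2 ≤ n) :
    (TId k b (n - 1) (n - 2) * PId k b (n - 1)) ⊓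
        (TId k b (n - 2) (n - 2) * (PId k b (n - 2) + PId k b (n - 1))) =
      TId k b (n - 2) (n - 2) * PId k b (n - 1) := by
  obtain ⟨m, rfl⟩ : ∃ m, n = m + 2 := ⟨n - 2, by omega⟩
  have e1 : m + 2 - 1 = m + 1 := rfl
  have e2 : m + 2 - 2 = m := rfl
  rw [e1, e2, TId_self]
  set A : Ideal (MvPolynomial (ℕ × ℕ) k) := ∏ j ∈ Finset.range m, PId k b j with hA
  set T : Ideal (MvPolynomial (ℕ × ℕ) k) := TId k b (m + 1) m with hT
  have hAT : A ≤ T := single_le_TId k b (m + 1) m _ (Finset.card_range m)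
    (Finset.range_subset_range.2 (Nat.le_succ m))
  -- key: (A * P_m) ⊓ P_{m+1} ≤ (A * P_m) * P_{m+1}
  have hkey : (A * PId k b m) ⊓ PId k b (m + 1) ≤ (A * PId k b m) * PId k b (m + 1) := by
    obtain ⟨G, hG, hfix⟩ := prod_fixed k b (m + 1) (Finset.range (m + 1))
      (fun j hj => by simp at hj; omega)
    have hprod : A * PId k b m = ∏ j ∈ Finset.range (m + 1), PId k b j := by
      rw [Finset.prod_range_succ]
    rw [hprod, hG]
    exact span_inf_le_mul (phiK k b (m + 1)) _ G hfix
      (phiK_zero k b (m + 1)) (phiK_sub_mem k b (m + 1))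
  apply le_antisymm
  · rintro x ⟨hx1, hx2⟩
    rw [SetLike.mem_coe, mul_add, Submodule.add_eq_sup, Submodule.mem_sup] at hx2
    obtain ⟨y, hy, z, hz, rfl⟩ := hx2
    have hzT : z ∈ T * PId k b (m + 1) :=
      Ideal.mul_mono_left hAT hz
    have hyT : y ∈ T * PId k b (m + 1) := by
      have : y = y + z - z := by ring
      rw [this]
      exact Ideal.sub_mem _ hx1 hzT
    have hyP : y ∈ PId k b (m + 1) := Ideal.mul_le_right (I := T) (J := PId k b (m + 1)) hyT
    have hy2 : y ∈ (A * PId k b m) * PId k b (m + 1) := hkey ⟨hy, hyP⟩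
    have hy3 : y ∈ A * PId k b (m + 1) := by
      rw [mul_assoc] at hy2
      exact Ideal.mul_mono_right Ideal.mul_le_right hy2
    exact Ideal.add_mem _ hy3 hz
  · exact le_inf (Ideal.mul_mono_left hAT)
      (Ideal.mul_mono_right le_sup_right)
end

section
/- The minimal monomial generating set of the transversal monomial ideal I_{n,t} consists exactly of the squarefree monomials x_{j_1 k_1}···x_{j_t k_t} with 1 ≤ j_1 < ··· < j_t ≤ n and 1 ≤ k_r ≤ b_{j_r}; in particular, I_{n,t} is generated in degree t and the number of minimal generators equals Σ_{1≤j_1<···<j_t≤n} b_{j_1}···b_{j_t}. -/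
open MvPolynomial

namespace TransAux

/-- exponent of the transversal monomial -/
noncomputable def dd (s : Finset ℕ) (κ : ℕ → ℕ) : (ℕ × ℕ) →₀ ℕ :=
  ∑ j ∈ s, Finsupp.single (j, κ j) 1

lemma dd_apply (s : Finset ℕ) (κ : ℕ → ℕ) (j i : ℕ) :
    dd s κ (j, i) = if j ∈ s ∧ κ j = i then 1 else 0 := by
  classical
  rw [dd, Finsupp.finset_sum_apply]
  by_cases hj : j ∈ s
  · rw [Finset.sum_eq_single_of_mem j hj
      (fun j' _ hne => by simp [Finsupp.single_apply, Prod.ext_iff, hne])]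
    simp [Finsupp.single_apply, Prod.ext_iff, hj]
  · rw [Finset.sum_eq_zero, if_neg (by tauto)]
    intro j' hj'
    have hne : j' ≠ j := fun h => hj (h ▸ hj')
    simp [Finsupp.single_apply, Prod.ext_iff, hne]

lemma dd_mem_support (s : Finset ℕ) (κ : ℕ → ℕ) (j i : ℕ) :
    (j, i) ∈ (dd s κ).support ↔ j ∈ s ∧ κ j = i := by
  rw [Finsupp.mem_support_iff, dd_apply]
  split <;> simp_all

lemma dd_fst (s : Finset ℕ) (κ : ℕ → ℕ) :
    (dd s κ).support.image Prod.fst = s := by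
  ext j
  simp only [Finset.mem_image]
  constructor
  · rintro ⟨⟨j', i⟩, hp, rfl⟩
    exact ((dd_mem_support _ _ _ _).1 hp).1
  · intro hj
    exact ⟨(j, κ j), (dd_mem_support _ _ _ _).2 ⟨hj, rfl⟩, rfl⟩

lemma dd_inj {s s' : Finset ℕ} {κ κ' : ℕ → ℕ} (h : dd s κ = dd s' κ') :
    s = s' ∧ ∀ j ∈ s, κ j = κ' j := by
  have hs : s = s' := by rw [← dd_fst s κ, ← dd_fst s' κ', h]
  refine ⟨hs, fun j hj => ?_⟩
  have h1 : dd s κ (j, κ j) = 1 := by rw [dd_apply, if_pos ⟨hj, rfl⟩]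
  rw [h, dd_apply] at h1
  by_contra hne
  rw [if_neg (by tauto)] at h1
  exact one_ne_zero h1.symm

lemma dd_congr {s : Finset ℕ} {κ κ' : ℕ → ℕ} (h : ∀ j ∈ s, κ j = κ' j) :
    dd s κ = dd s κ' :=
  Finset.sum_congr rfl fun j hj => by rw [h j hj]

lemma dd_sum (s : Finset ℕ) (κ : ℕ → ℕ) :
    (dd s κ).sum (fun _ n => n) = s.card := by
  classical
  rw [dd, ← Finsupp.sum_finset_sum_index (fun _ => rfl) (fun _ _ _ => rfl)]
  simp [Finsupp.sum_single_index]

lemma prod_X_eq (k : Type*) [Field k] (s : Finset ℕ) (κ : ℕ → ℕ) :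
    (∏ j ∈ s, (X (j, κ j) : MvPolynomial (ℕ × ℕ) k)) = monomial (dd s κ) 1 := by
  classical
  induction s using Finset.induction_on with
  | empty => simp [dd]
  | insert a s ha ih =>
    have hd : dd (insert a s) κ = Finsupp.single (a, κ a) 1 + dd s κ := Finset.sum_insert ha
    rw [Finset.prod_insert ha, ih, hd, X, monomial_mul, one_mul]

lemma eq_of_le_of_sum_eq {f g : (ℕ × ℕ) →₀ ℕ} (h : f ≤ g)
    (hs : f.sum (fun _ n => n) = g.sum (fun _ n => n)) : f = g := by
  obtain ⟨c, rfl⟩ := exists_add_of_le h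
  have hc : c.sum (fun _ n => n) = 0 := by
    rw [Finsupp.sum_add_index' (fun _ => rfl) (fun _ _ _ => rfl)] at hs
    omega
  have hc0 : c = 0 := by
    ext a
    by_cases ha : a ∈ c.support
    · exact (Finset.sum_eq_zero_iff.1 hc) a ha
    · simpa using Finsupp.notMem_support_iff.1 ha
  rw [hc0, add_zero]

lemma prod_PId (k : Type*) [Field k] (b : ℕ → ℕ) (s : Finset ℕ) :
    (∏ j ∈ s, PId k b j) =
      Ideal.span {f | ∃ κ : ℕ → ℕ, (∀ j ∈ s, κ j < b j) ∧ f = ∏ j ∈ s, X (j, κ j)} := by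
  classical
  induction s using Finset.induction_on with
  | empty =>
    have h1 : {f : MvPolynomial (ℕ × ℕ) k | ∃ κ : ℕ → ℕ, (∀ j ∈ (∅ : Finset ℕ), κ j < b j) ∧
        f = ∏ j ∈ (∅ : Finset ℕ), X (j, κ j)} = {1} := by
      ext f
      simp [eq_comm]
    rw [Finset.prod_empty, h1, Ideal.span_singleton_one, Ideal.one_eq_top]
  | insert a s ha ih =>
    rw [Finset.prod_insert ha, ih, PId, Ideal.span_mul_span']
    congr 1
    ext f
    constructor
    · intro hf
      rw [Set.mem_mul] at hf
      obtain ⟨g, ⟨i, hi, rfl⟩, h, ⟨κ, hκ, rfl⟩, rfl⟩ := hf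
      refine ⟨Function.update κ a i, fun j hj => ?_, ?_⟩
      · rcases Finset.mem_insert.1 hj with rfl | hj'
        · rwa [Function.update_self]
        · rw [Function.update_of_ne (by rintro rfl; exact ha hj')]
          exact hκ j hj'
      · rw [Finset.prod_insert ha, Function.update_self]
        congr 1
        exact Finset.prod_congr rfl fun j hj => by
          rw [Function.update_of_ne (by rintro rfl; exact ha hj)]
    · rintro ⟨κ, hκ, rfl⟩
      rw [Finset.prod_insert ha]
      exact Set.mul_mem_mul ⟨κ a, hκ a (Finset.mem_insert_self a s), rfl⟩
        ⟨κ, fun j hj => hκ j (Finset.mem_insert_of_mem hj), rfl⟩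

end TransAux

/-- the minimal monomial generating set of `I_{n,t}` consists exactly of the
squarefree monomials `x_{j_1 k_1}⋯x_{j_t k_t}` (`j_1<⋯<j_t < n`, `k_r < b_{j_r}`,
zero-based); they all have degree `t`, none lies in the ideal generated by the others, and
there are `Σ_{j_1<⋯<j_t} b_{j_1}⋯b_{j_t}` of them. -/
theorem transversal_min_gens (k : Type*) [Field k] (b : ℕ → ℕ) (n t : ℕ)
    (ht : 1 ≤ t) (htn : t ≤ n)
    (G : Set (MvPolynomial (ℕ × ℕ) k))
    (hGdef : G = {f | ∃ s : Finset ℕ, s.card = t ∧ s ⊆ Finset.range n ∧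
      ∃ κ : ℕ → ℕ, (∀ j ∈ s, κ j < b j) ∧ f = ∏ j ∈ s, X (j, κ j)}) :
    TId k b n t = Ideal.span G ∧
      (∀ g ∈ G, g.totalDegree = t) ∧
      (∀ g ∈ G, g ∉ Ideal.span (G \ {g})) ∧
      G.ncard = ∑ s ∈ Finset.powersetCard t (Finset.range n), ∏ j ∈ s, b j := by
  classical
  open TransAux in
  set D : Set ((ℕ × ℕ) →₀ ℕ) := {d | ∃ s : Finset ℕ, s.card = t ∧ s ⊆ Finset.range n ∧
    ∃ κ : ℕ → ℕ, (∀ j ∈ s, κ j < b j) ∧ d = dd s κ} with hD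
  have hinj : Function.Injective (fun d : (ℕ × ℕ) →₀ ℕ => (monomial d (1 : k))) :=
    monomial_left_injective one_ne_zero
  have hGD : G = (fun d => monomial d (1 : k)) '' D := by
    rw [hGdef]
    ext f
    simp only [Set.mem_setOf_eq, Set.mem_image, hD]
    constructor
    · rintro ⟨s, hc, hs, κ, hκ, rfl⟩
      exact ⟨dd s κ, ⟨s, hc, hs, κ, hκ, rfl⟩, (prod_X_eq k s κ).symm⟩
    · rintro ⟨d, ⟨s, hc, hs, κ, hκ, rfl⟩, rfl⟩
      exact ⟨s, hc, hs, κ, hκ, (prod_X_eq k s κ).symm⟩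
  refine ⟨?_, ?_, ?_, ?_⟩
  · rw [TId, hGdef]
    have hU : {f : MvPolynomial (ℕ × ℕ) k | ∃ s : Finset ℕ, s.card = t ∧ s ⊆ Finset.range n ∧
        ∃ κ : ℕ → ℕ, (∀ j ∈ s, κ j < b j) ∧ f = ∏ j ∈ s, X (j, κ j)} =
        ⋃ (s : Finset ℕ), ⋃ (_ : s.card = t ∧ s ⊆ Finset.range n),
          {f | ∃ κ : ℕ → ℕ, (∀ j ∈ s, κ j < b j) ∧ f = ∏ j ∈ s, X (j, κ j)} := by
      ext f
      simp only [Set.mem_iUnion, Set.mem_setOf_eq]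
      tauto
    rw [hU, Ideal.span_iUnion]
    refine iSup_congr fun s => ?_
    rw [Ideal.span_iUnion]
    exact iSup_congr fun _ => prod_PId k b s
  · intro g hg
    rw [hGdef] at hg
    obtain ⟨s, hc, hs, κ, hκ, rfl⟩ := hg
    rw [prod_X_eq, totalDegree_monomial _ (one_ne_zero), dd_sum, hc]
  · intro g hg hmem
    have hg' := hg
    rw [hGdef] at hg'
    obtain ⟨s, hc, hs, κ, hκ, hgeq⟩ := hg'
    have hgm : g = monomial (dd s κ) 1 := by rw [hgeq, prod_X_eq]
    have hd0 : dd s κ ∈ D := ⟨s, hc, hs, κ, hκ, rfl⟩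
    have hdiff : G \ {g} = (fun d => monomial d (1 : k)) '' (D \ {dd s κ}) := by
      rw [Set.image_diff hinj, ← hGD, Set.image_singleton, hgm]
    rw [hdiff, mem_ideal_span_monomial_image] at hmem
    obtain ⟨d', hd', hle⟩ := hmem (dd s κ) (by simp [hgm, support_monomial])
    obtain ⟨⟨s', hc', hs', κ', hκ', rfl⟩, hne⟩ := hd'
    exact hne (eq_of_le_of_sum_eq hle (by rw [dd_sum, dd_sum, hc, hc']))
  · set F : Finset ((ℕ × ℕ) →₀ ℕ) :=
      (Finset.powersetCard t (Finset.range n)).biUnion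
        (fun s => (s.pi (fun j => Finset.range (b j))).image
          (fun p => dd s (fun j => if h : j ∈ s then p j h else 0))) with hF
    have hDF : D = ↑F := by
      ext d
      simp only [hD, Set.mem_setOf_eq, hF, Finset.coe_biUnion, Set.mem_iUnion,
        Finset.mem_coe, Finset.mem_image, Finset.mem_pi, Finset.mem_powersetCard,
        Finset.mem_range]
      constructor
      · rintro ⟨s, hc, hs, κ, hκ, rfl⟩
        refine ⟨s, ⟨hs, hc⟩, fun j _ => κ j, fun j hj => hκ j hj, ?_⟩
        exact (dd_congr (fun j hj => by simp [hj])).symm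
      · rintro ⟨s, ⟨hs, hc⟩, p, hp, rfl⟩
        exact ⟨s, hc, hs, _, fun j hj => by simpa [hj] using hp j hj, rfl⟩
    have hdisj : ∀ s ∈ Finset.powersetCard t (Finset.range n),
        ∀ s' ∈ Finset.powersetCard t (Finset.range n), s ≠ s' →
        Disjoint ((s.pi (fun j => Finset.range (b j))).image
          (fun p => dd s (fun j => if h : j ∈ s then p j h else 0)))
          ((s'.pi (fun j => Finset.range (b j))).image
          (fun p => dd s' (fun j => if h : j ∈ s' then p j h else 0))) := by
      intro s _ s' _ hne
      rw [Finset.disjoint_left]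
      rintro d hd hd'
      obtain ⟨p, _, rfl⟩ := Finset.mem_image.1 hd
      obtain ⟨p', _, heq⟩ := Finset.mem_image.1 hd'
      exact hne (dd_inj heq.symm).1
    rw [hGD, Set.ncard_image_of_injective _ hinj, hDF, Set.ncard_coe_finset, hF,
      Finset.card_biUnion hdisj]
    refine Finset.sum_congr rfl fun s _ => ?_
    rw [Finset.card_image_of_injOn, Finset.card_pi]
    · simp
    · intro p hp p' hp' heq
      have h2 := (dd_inj heq).2
      funext j hj
      have := h2 j hj
      simpa [hj] using this
end

section
/- For ideals generated by disjoint sets of variables, intersection distributes: (I_{s,t} + I_{s-1,t-1}·Q) ∩ (I_{s,t-1}·Q) = I_{s,t}·Q + I_{s-1,t-1}·Q, where Q is generated by variables disjoint from those appearing in I_{s,t}, I_{s,t-1}, I_{s-1,t-1}, and consequently this equals I_{s-1,t-1}·Q since I_{s,t} ⊆ I_{s-1,t-1}. -/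
open MvPolynomial
open scoped Pointwise

section Aux

variable {k : Type*} [Field k] {b : ℕ → ℕ}

/-- Generic comparison lemma for transversal ideals: if every admissible index set for
`(p, q)` contains an admissible index set for `(p', q')`, then `I_{p,q} ≤ I_{p',q'}`. -/
private lemma TId_le_TId {p p' q q' : ℕ}
    (h : ∀ c : Finset ℕ, c.card = q → c ⊆ Finset.range p →
      ∃ c' ⊆ c, c'.card = q' ∧ c' ⊆ Finset.range p') :
    TId k b p q ≤ TId k b p' q' := by
  rw [TId, TId]
  refine iSup_le fun c => iSup_le fun hc => ?_
  obtain ⟨c', hc'c, hcard, hrange⟩ := h c hc.1 hc.2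
  have hprod : (∏ j ∈ c, PId k b j) ≤ ∏ j ∈ c', PId k b j := by
    rw [← Finset.prod_sdiff hc'c]
    exact Ideal.mul_le_right
  exact hprod.trans (le_iSup₂_of_le c' ⟨hcard, hrange⟩ le_rfl)

private lemma PId_le_QId {r n j : ℕ} (hj : j ∈ Finset.Ico r n) :
    PId k b j ≤ QId k b r n := by
  rw [QId, Ideal.sum_eq_sup]
  exact Finset.le_sup hj

private lemma QId_le {r n : ℕ} {K : Ideal (MvPolynomial (ℕ × ℕ) k)}
    (h : ∀ j ∈ Finset.Ico r n, PId k b j ≤ K) : QId k b r n ≤ K := by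
  rw [QId, Ideal.sum_eq_sup]
  exact Finset.sup_le h

/-- The transversal ideal as the span of an explicit set of monomials. -/
private lemma TId_eq_span (p q : ℕ) :
    TId k b p q = Ideal.span (⋃ (c : Finset ℕ) (_ : c.card = q ∧ c ⊆ Finset.range p),
      (∏ j ∈ c, {f : MvPolynomial (ℕ × ℕ) k | ∃ i < b j, f = X (j, i)})) := by
  rw [Ideal.span, Submodule.span_iUnion₂, TId]
  refine iSup_congr fun c => iSup_congr fun _ => ?_
  simp only [PId]
  rw [Ideal.prod_span]

/-- Generic key lemma: if `σ` is a ring endomorphism fixing a spanning set of `A`,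
killing `Q`, and such that `r - σ r ∈ Q` always, then every `f ∈ A` satisfies
`σ f ∈ A` and `f - σ f ∈ A * Q`. -/
private lemma stable_aux {R : Type*} [CommRing R] (σ : R →+* R) (A Q : Ideal R)
    (hsub : ∀ r, r - σ r ∈ Q) (T : Set R) (hAT : A = Ideal.span T)
    (hT : ∀ a ∈ T, σ a = a) :
    ∀ f ∈ A, σ f ∈ A ∧ f - σ f ∈ A * Q := by
  subst hAT
  intro f hf
  induction hf using Submodule.span_induction with
  | mem a ha =>
    refine ⟨?_, ?_⟩
    · rw [hT a ha]; exact Ideal.subset_span ha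
    · rw [hT a ha, sub_self]; exact zero_mem _
  | zero => exact ⟨by rw [map_zero]; exact zero_mem _, by rw [map_zero, sub_zero]; exact zero_mem _⟩
  | add x y hx hy ihx ihy =>
    refine ⟨by rw [map_add]; exact add_mem ihx.1 ihy.1, ?_⟩
    have : x + y - σ (x + y) = (x - σ x) + (y - σ y) := by rw [map_add]; ring
    rw [this]; exact add_mem ihx.2 ihy.2
  | smul r x hx ih =>
    rw [smul_eq_mul]
    refine ⟨by rw [map_mul]; exact Ideal.mul_mem_left _ _ ih.1, ?_⟩
    have : r * x - σ (r * x) = r * (x - σ x) + σ x * (r - σ r) := by rw [map_mul]; ring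
    rw [this]
    exact add_mem (Ideal.mul_mem_left _ _ ih.2) (Ideal.mul_mem_mul ih.1 (hsub r))

/-- Key lemma: a transversal ideal on blocks `< p ≤ s` intersected with `Q_{s}` is
contained in the product. -/
private lemma TId_inf_QId_le (n s p q : ℕ) (hp : p ≤ s) :
    TId k b p q ⊓ QId k b s n ≤ TId k b p q * QId k b s n := by
  classical
  set σ : MvPolynomial (ℕ × ℕ) k →+* MvPolynomial (ℕ × ℕ) k :=
    (aeval fun v : ℕ × ℕ =>
      if s ≤ v.1 ∧ v.1 < n ∧ v.2 < b v.1 then 0 else X v).toRingHom with hσ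
  have hσX : ∀ v : ℕ × ℕ,
      σ (X v) = if s ≤ v.1 ∧ v.1 < n ∧ v.2 < b v.1 then 0 else X v := by
    intro v; simp [hσ]
  have hσC : ∀ a : k, σ (C a) = C a := by
    intro a; simp [hσ]
  -- `r - σ r ∈ Q` for every `r`.
  have hsub : ∀ r, r - σ r ∈ QId k b s n := by
    intro r
    induction r using MvPolynomial.induction_on with
    | C a => rw [hσC, sub_self]; exact zero_mem _
    | add p q hp hq =>
      have : p + q - σ (p + q) = (p - σ p) + (q - σ q) := by rw [map_add]; ring
      rw [this]; exact add_mem hp hq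
    | mul_X p v hp =>
      rw [map_mul, hσX]
      by_cases hv : s ≤ v.1 ∧ v.1 < n ∧ v.2 < b v.1
      · rw [if_pos hv, mul_zero, sub_zero]
        have hXv : X v ∈ PId k b v.1 := by
          refine Ideal.subset_span ⟨v.2, hv.2.2, ?_⟩
          rfl
        exact Ideal.mul_mem_left _ _
          (PId_le_QId (Finset.mem_Ico.mpr ⟨hv.1, hv.2.1⟩) hXv)
      · rw [if_neg hv]
        have : p * X v - σ p * X v = (p - σ p) * X v := by ring
        rw [this]
        exact Ideal.mul_mem_right _ _ hp
  -- `σ` kills `Q`.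
  have hQ : ∀ g ∈ QId k b s n, σ g = 0 := by
    have : QId k b s n ≤ RingHom.ker σ := by
      refine QId_le fun j hj => ?_
      rw [PId, Ideal.span_le]
      rintro f ⟨i, hi, rfl⟩
      rw [Finset.mem_Ico] at hj
      have : σ (X (j, i)) = 0 := by
        rw [hσX, if_pos ⟨hj.1, hj.2, hi⟩]
      simpa [RingHom.mem_ker] using this
    intro g hg
    exact this hg
  -- `σ` fixes the generators of `TId k b p q`.
  have hT : ∀ a ∈ (⋃ (c : Finset ℕ) (_ : c.card = q ∧ c ⊆ Finset.range p),
      (∏ j ∈ c, {f : MvPolynomial (ℕ × ℕ) k | ∃ i < b j, f = X (j, i)})), σ a = a := by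
    intro a ha
    rw [Set.mem_iUnion₂] at ha
    obtain ⟨c, ⟨hcard, hrange⟩, hmem⟩ := ha
    rw [Set.mem_finset_prod] at hmem
    obtain ⟨g, hg, rfl⟩ := hmem
    rw [map_prod]
    refine Finset.prod_congr rfl fun j hj => ?_
    obtain ⟨i, hi, hgj⟩ := hg hj
    have hjs : j < s := lt_of_lt_of_le (Finset.mem_range.mp (hrange hj)) hp
    rw [hgj, hσX]
    rw [if_neg (by simp only [not_and]; intro h; omega)]
  rintro f ⟨hfA, hfQ⟩
  obtain ⟨_, h2⟩ := stable_aux σ (TId k b p q) (QId k b s n) hsub _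
    (TId_eq_span p q) hT f hfA
  rwa [hQ f hfQ, sub_zero] at h2

end Aux

/-- with `Q = Q_{s+1}` (zero-based `QId k b s n`), intersection distributes:
`(I_{s,t} + I_{s-1,t-1}·Q) ∩ (I_{s,t-1}·Q) = I_{s,t}·Q + I_{s-1,t-1}·Q`, and this equals
`I_{s-1,t-1}·Q` since `I_{s,t} ⊆ I_{s-1,t-1}`. -/
theorem transversal_distributes (k : Type*) [Field k] (b : ℕ → ℕ) (n t s : ℕ)
    (ht : 2 ≤ t) (hts : t ≤ s) (hsn : s ≤ n - 1) :
    (TId k b s t + TId k b (s - 1) (t - 1) * QId k b s n) ⊓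
        (TId k b s (t - 1) * QId k b s n) =
      TId k b s t * QId k b s n + TId k b (s - 1) (t - 1) * QId k b s n ∧
    TId k b s t * QId k b s n + TId k b (s - 1) (t - 1) * QId k b s n =
      TId k b (s - 1) (t - 1) * QId k b s n := by
  classical
  -- basic inclusions between transversal ideals
  have L1 : TId k b s t ≤ TId k b s (t - 1) := by
    refine TId_le_TId fun c hcard hrange => ?_
    obtain ⟨c', hc', hcard'⟩ := Finset.exists_subset_card_eq (s := c) (n := t - 1) (by omega)
    exact ⟨c', hc', hcard', fun x hx => hrange (hc' hx)⟩
  have L2 : TId k b s t ≤ TId k b (s - 1) (t - 1) := by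
    refine TId_le_TId fun c hcard hrange => ?_
    have hsub : c.erase (s - 1) ⊆ Finset.range (s - 1) := by
      intro x hx
      have hxc := Finset.mem_of_mem_erase hx
      have hxne := Finset.ne_of_mem_erase hx
      have := Finset.mem_range.mp (hrange hxc)
      exact Finset.mem_range.mpr (by omega)
    have hcard2 : t - 1 ≤ (c.erase (s - 1)).card := by
      by_cases hmem : s - 1 ∈ c
      · rw [Finset.card_erase_of_mem hmem, hcard]
      · rw [Finset.erase_eq_of_notMem hmem, hcard]; omega
    obtain ⟨c', hc', hcard'⟩ := Finset.exists_subset_card_eq (n := t - 1) hcard2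
    exact ⟨c', hc'.trans (Finset.erase_subset _ _), hcard', fun x hx => hsub (hc' hx)⟩
  have L3 : TId k b (s - 1) (t - 1) ≤ TId k b s (t - 1) := by
    refine TId_le_TId fun c hcard hrange => ?_
    exact ⟨c, subset_rfl, hcard, hrange.trans
      (Finset.range_subset_range.mpr (by omega))⟩
  -- second part
  have part2 : TId k b s t * QId k b s n + TId k b (s - 1) (t - 1) * QId k b s n =
      TId k b (s - 1) (t - 1) * QId k b s n := by
    rw [Submodule.add_eq_sup, sup_eq_right]
    exact Ideal.mul_mono_left L2
  refine ⟨?_, part2⟩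
  rw [part2]
  -- first part, with RHS rewritten to `I_{s-1,t-1}·Q` using modularity
  have hmod :
      (TId k b s t + TId k b (s - 1) (t - 1) * QId k b s n) ⊓
          (TId k b s (t - 1) * QId k b s n) =
        TId k b (s - 1) (t - 1) * QId k b s n ⊔
          (TId k b s t ⊓ (TId k b s (t - 1) * QId k b s n)) := by
    rw [Submodule.add_eq_sup, sup_comm]
    exact sup_inf_assoc_of_le _ (Ideal.mul_mono_left L3)
  rw [hmod, sup_eq_left]
  -- remains: I_{s,t} ⊓ I_{s,t-1}·Q ≤ I_{s-1,t-1}·Q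
  calc TId k b s t ⊓ (TId k b s (t - 1) * QId k b s n)
      ≤ TId k b s t ⊓ QId k b s n := inf_le_inf_left _ Ideal.mul_le_right
    _ ≤ TId k b s t * QId k b s n := TId_inf_QId_le n s s t le_rfl
    _ ≤ TId k b (s - 1) (t - 1) * QId k b s n := Ideal.mul_mono_left L2
end
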